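/- The adjunction between the category Top of topological spaces and the category Loc of locales, given by the open-sets functor Lc : Top → Loc and the points functor Sp : Loc → Top, restricts to an equivalence between the full subcategory of Top whose objects are the sober locally compact spaces and the full subcategory of Loc whose objects are the continuous locales (Hofmann–Lawson duality). -/

import Mathlib

open CategoryTheory TopologicalSpace

universe u

/-- The way-below relation in a complete lattice: `x ≪ a` iff for every nonempty
directed subset `D` with `a ≤ ⨆ D` there is `d ∈ D` with `x ≤ d`. -/
def WayBelow {L : Type*} [CompleteLattice L] (x a : L) : Prop :=
  ∀ D : Set L, D.Nonempty → DirectedOn (· ≤ ·) D → a ≤ sSup D → ∃ d ∈ D, x ≤ d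

/-- A locale is continuous if every element of its underlying frame is the supremum of
the elements way below it. -/
def IsContinuousLocale (L : Locale.{u}) : Prop :=
  ∀ a : L, a = sSup {x : L | WayBelow x a}

/-- A topological space is sober and locally compact if every irreducible closed set is
the closure of a unique point (`QuasiSober` together with `T0Space`) and every point has
a neighbourhood basis of compact sets. -/
def IsSoberLocallyCompact (X : TopCat.{u}) : Prop :=
  QuasiSober X ∧ T0Space X ∧ LocallyCompactSpace X


namespace HL

variable {L : Type*} [CompleteLattice L]

theorem wayBelow_le {x a : L} (h : WayBelow x a) : x ≤ a := by
  obtain ⟨d, hd, hxd⟩ := h {a} ⟨a, rfl⟩ (directedOn_singleton a)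
    (le_sSup rfl)
  rwa [Set.mem_singleton_iff.1 hd] at hxd

theorem bot_wayBelow (a : L) : WayBelow ⊥ a := fun _ ⟨d, hd⟩ _ _ => ⟨d, hd, bot_le⟩

theorem wayBelow_mono_left {x' x a : L} (hx : x' ≤ x) (h : WayBelow x a) : WayBelow x' a :=
  fun D hD hdir hle => by obtain ⟨d, hd, hxd⟩ := h D hD hdir hle; exact ⟨d, hd, hx.trans hxd⟩

theorem wayBelow_mono_right {x a a' : L} (h : WayBelow x a) (ha : a ≤ a') : WayBelow x a' :=
  fun D hD hdir hle => h D hD hdir (ha.trans hle)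

theorem wayBelow_sup {x y a : L} (hx : WayBelow x a) (hy : WayBelow y a) :
    WayBelow (x ⊔ y) a := by
  intro D hD hdir hle
  obtain ⟨d, hd, hxd⟩ := hx D hD hdir hle
  obtain ⟨e, he, hye⟩ := hy D hD hdir hle
  obtain ⟨f, hf, hdf, hef⟩ := hdir d hd e he
  exact ⟨f, hf, sup_le (hxd.trans hdf) (hye.trans hef)⟩

/-- The set of elements way below `a`, as needed for continuity. -/
theorem directedOn_wayBelow (a : L) : DirectedOn (· ≤ ·) {x : L | WayBelow x a} :=
  fun x hx y hy => ⟨x ⊔ y, wayBelow_sup hx hy, le_sup_left, le_sup_right⟩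

variable (hcont : ∀ a : L, a = sSup {x : L | WayBelow x a})

include hcont in
theorem interpolate {x a : L} (h : WayBelow x a) : ∃ y, WayBelow x y ∧ WayBelow y a := by
  set B : Set L := {z | ∃ y, WayBelow z y ∧ WayBelow y a} with hB
  have hne : B.Nonempty := ⟨⊥, ⊥, bot_wayBelow ⊥, bot_wayBelow a⟩
  have hdir : DirectedOn (· ≤ ·) B := by
    rintro z ⟨y, hzy, hya⟩ z' ⟨y', hzy', hy'a⟩
    exact ⟨z ⊔ z', ⟨y ⊔ y', wayBelow_sup (wayBelow_mono_right hzy le_sup_left) (wayBelow_mono_right hzy' le_sup_right),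
      wayBelow_sup hya hy'a⟩, le_sup_left, le_sup_right⟩
  have hle : a ≤ sSup B := by
    conv_lhs => rw [hcont a]
    refine sSup_le fun y hy => ?_
    calc y = sSup {z | WayBelow z y} := hcont y
    _ ≤ sSup B := sSup_le_sSup fun z hz => ⟨y, hz, hy⟩
  obtain ⟨z, ⟨y, hzy, hya⟩, hxz⟩ := h B hne hdir hle
  exact ⟨y, wayBelow_mono_left hxz hzy, hya⟩

include hcont in
/-- An interpolating chain: `c 0 = a`, `x ≪ c n` for all `n`, and `c (n+1) ≪ c n`. -/
theorem exists_chain {x a : L} (h : WayBelow x a) :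
    ∃ c : ℕ → L, c 0 = a ∧ (∀ n, WayBelow x (c n)) ∧ ∀ n, WayBelow (c (n + 1)) (c n) := by
  have step : ∀ y : {y : L // WayBelow x y}, ∃ z : {y : L // WayBelow x y},
      WayBelow z.1 y.1 := fun y => by
    obtain ⟨z, hxz, hzy⟩ := interpolate hcont y.2
    exact ⟨⟨z, hxz⟩, hzy⟩
  choose f hf using step
  refine ⟨fun n => (f^[n] ⟨a, h⟩).1, rfl, fun n => (f^[n] ⟨a, h⟩).2, fun n => ?_⟩
  show WayBelow (f^[n+1] ⟨a, h⟩).1 _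
  rw [Function.iterate_succ_apply']
  exact hf _

end HL

namespace HL
variable {L : Type*} [Order.Frame L]

/-- Scott-open filter, as a predicate on sets. -/
structure IsSOF (G : Set L) : Prop where
  top_mem : ⊤ ∈ G
  up : ∀ {y z : L}, y ∈ G → y ≤ z → z ∈ G
  inf_mem : ∀ {y z : L}, y ∈ G → z ∈ G → y ⊓ z ∈ G
  scott : ∀ D : Set L, D.Nonempty → DirectedOn (· ≤ ·) D → sSup D ∈ G → ∃ d ∈ D, d ∈ G

theorem sup_sSup_eq {w : L} {D : Set L} (hD : D.Nonempty) :
    w ⊔ sSup D = sSup (Set.image (fun d => w ⊔ d) D) := by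
  apply le_antisymm
  · obtain ⟨d, hd⟩ := hD
    refine sup_le (le_sSup_of_le (Set.mem_image_of_mem _ hd) le_sup_left)
      (sSup_le fun e he => le_sSup_of_le (Set.mem_image_of_mem _ he) le_sup_right)
  · refine sSup_le ?_
    rintro _ ⟨d, hd, rfl⟩
    exact sup_le le_sup_left (le_sup_of_le_right (le_sSup hd))

theorem isSOF_sup_shift {G : Set L} (hG : IsSOF G) (w : L) : IsSOF {y | w ⊔ y ∈ G} := by
  constructor
  · show w ⊔ ⊤ ∈ G; rw [sup_top_eq]; exact hG.top_mem
  · intro y z hy hyz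
    exact hG.up hy (sup_le_sup_left hyz w)
  · intro y z hy hz
    show w ⊔ y ⊓ z ∈ G
    rw [sup_inf_left]
    exact hG.inf_mem hy hz
  · intro D hne hdir hs
    have hdir' : DirectedOn (· ≤ ·) (Set.image (fun d => w ⊔ d) D) := by
      rintro _ ⟨d, hd, rfl⟩ _ ⟨e, he, rfl⟩
      obtain ⟨f, hf, hdf, hef⟩ := hdir d hd e he
      exact ⟨w ⊔ f, ⟨f, hf, rfl⟩, sup_le_sup_left hdf w, sup_le_sup_left hef w⟩
    have : sSup (Set.image (fun d => w ⊔ d) D) ∈ G := by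
      rw [← sup_sSup_eq hne]; exact hs
    obtain ⟨e, ⟨d, hd, rfl⟩, heG⟩ := hG.scott _ (hne.image _) hdir' this
    exact ⟨d, hd, heG⟩

/-- Key lemma: a Scott-open filter avoiding `b` extends to a completely prime filter
avoiding `b`; equivalently there is a point of the locale below... -/
theorem exists_point {G : Set L} (hG : IsSOF G) {b : L} (hb : b ∉ G) :
    ∃ p : FrameHom L Prop, (∀ y ∈ G, p y) ∧ ¬ p b := by
  haveI := Classical.decEq L
  set S : Set (Set L) := {H | IsSOF H ∧ G ⊆ H ∧ b ∉ H} with hS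
  have hub : ∀ c ⊆ S, IsChain (· ⊆ ·) c → c.Nonempty → ∃ ub ∈ S, ∀ s ∈ c, s ⊆ ub := by
    rintro c hcS hchain ⟨H0, hH0⟩
    refine ⟨Set.sUnion c, ⟨?_, ?_, ?_⟩, fun s hs => Set.subset_sUnion_of_mem hs⟩
    · constructor
      · exact ⟨H0, hH0, (hcS hH0).1.top_mem⟩
      · rintro y z ⟨H, hH, hy⟩ hyz
        exact ⟨H, hH, (hcS hH).1.up hy hyz⟩
      · rintro y z ⟨H, hH, hy⟩ ⟨K, hK, hz⟩
        rcases hchain.total hH hK with h | h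
        · exact ⟨K, hK, (hcS hK).1.inf_mem (h hy) hz⟩
        · exact ⟨H, hH, (hcS hH).1.inf_mem hy (h hz)⟩
      · rintro D hne hdir ⟨H, hH, hs⟩
        obtain ⟨d, hd, hdH⟩ := (hcS hH).1.scott D hne hdir hs
        exact ⟨d, hd, H, hH, hdH⟩
    · exact (hcS hH0).2.1.trans (Set.subset_sUnion_of_mem hH0)
    · rintro ⟨H, hH, hbH⟩
      exact (hcS hH).2.2 hbH
  obtain ⟨M, hGM, hMS, hMmax⟩ : ∃ M, G ⊆ M ∧ M ∈ S ∧ ∀ H ∈ S, M ⊆ H → H = M := by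
    obtain ⟨M, hGM, hM⟩ := zorn_subset_nonempty S hub G ⟨hG, subset_rfl, hb⟩
    exact ⟨M, hGM, hM.1, fun H hH hMH => hM.eq_of_ge hH hMH⟩
  obtain ⟨hM, hGM', hbM⟩ := hMS
  have hbot : (⊥ : L) ∉ M := fun h => hbM (hM.up h bot_le)
  -- key step for primality
  have key : ∀ u v : L, u ⊔ v ∈ M → v ∉ M → u ⊔ b ∈ M := by
    intro u v huv hv
    by_contra hub
    have hmem : {y | u ⊔ y ∈ M} ∈ S :=
      ⟨isSOF_sup_shift hM u, fun y hy => hM.up (hGM' hy) le_sup_right, hub⟩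
    have heq := hMmax _ hmem (fun y hy => hM.up hy le_sup_right)
    exact hv (heq ▸ (show v ∈ {y | u ⊔ y ∈ M} from huv))
  have hprime : ∀ u v : L, u ⊔ v ∈ M → u ∈ M ∨ v ∈ M := by
    intro u v huv
    by_contra hcon
    push_neg at hcon
    have h1 : u ⊔ b ∈ M := key u v huv hcon.2
    have h2 : b ⊔ u ∈ M := by rwa [sup_comm] at h1
    have h3 : b ⊔ b ∈ M := key b u h2 hcon.1
    rw [sup_idem] at h3
    exact hbM h3
  have finstep : ∀ (T : Set L) (F : Finset L), ↑F ⊆ T → F.sup id ∈ M → ∃ t ∈ T, t ∈ M := by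
    intro T F
    induction F using Finset.induction_on with
    | empty => intro _ h; rw [Finset.sup_empty] at h; exact absurd h hbot
    | insert _ _ hnm ih =>
      intro hsub hsup
      rw [Finset.sup_insert] at hsup
      rcases hprime _ _ hsup with h | h
      · exact ⟨_, hsub (Finset.mem_insert_self _ _), h⟩
      · exact ih (fun x hx => hsub (Finset.mem_insert_of_mem hx)) h
  have hcprime : ∀ T : Set L, sSup T ∈ M → ∃ t ∈ T, t ∈ M := by
    intro T hT
    set D : Set L := {y | ∃ F : Finset L, ↑F ⊆ T ∧ y = F.sup id} with hD
    have hne : D.Nonempty := ⟨⊥, ∅, by simp⟩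
    have hdir : DirectedOn (· ≤ ·) D := by
      rintro y ⟨F, hF, rfl⟩ z ⟨F', hF', rfl⟩
      refine ⟨(F ∪ F').sup id, ⟨F ∪ F', ?_, rfl⟩, Finset.sup_mono Finset.subset_union_left,
        Finset.sup_mono Finset.subset_union_right⟩
      rw [Finset.coe_union]
      exact Set.union_subset hF hF'
    have hsup : sSup D = sSup T := by
      apply le_antisymm
      · refine sSup_le ?_
        rintro _ ⟨F, hF, rfl⟩
        exact Finset.sup_le fun i hi => le_sSup (hF hi)
      · exact sSup_le fun t ht => le_sSup ⟨{t}, by simpa using ht, by simp⟩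
    obtain ⟨y, ⟨F, hF, rfl⟩, hyM⟩ := hM.scott D hne hdir (by rw [hsup]; exact hT)
    exact finstep T F hF hyM
  refine ⟨⟨⟨⟨fun y => y ∈ M, fun y z => propext ⟨fun h => ⟨hM.up h inf_le_left,
      hM.up h inf_le_right⟩, fun h => hM.inf_mem h.1 h.2⟩⟩,
      propext ⟨fun _ => trivial, fun _ => hM.top_mem⟩⟩, fun T => propext ?_⟩,
    fun y hy => hGM' hy, hbM⟩
  rw [sSup_Prop_eq]
  constructor
  · intro h
    obtain ⟨t, ht, htM⟩ := hcprime T h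
    exact ⟨_, ⟨t, ht, rfl⟩, htM⟩
  · rintro ⟨_, ⟨t, ht, rfl⟩, htM⟩
    exact hM.up htM (le_sSup ht)

end HL

namespace HL
variable {L : Type*} [Order.Frame L]

theorem chain_filter (hcont : ∀ a : L, a = sSup {x : L | WayBelow x a})
    {x a : L} (h : WayBelow x a) :
    ∃ F : Set L, IsSOF F ∧ a ∈ F ∧ ∀ y ∈ F, x ≤ y := by
  obtain ⟨c, hc0, hxc, hstep⟩ := exists_chain hcont h
  have hanti : ∀ {n m}, n ≤ m → c m ≤ c n := by
    intro n m hnm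
    induction m with
    | zero => rw [Nat.le_zero.1 hnm]
    | succ k ih =>
      rcases Nat.lt_or_ge n (k+1) with hlt | hge
      · exact (wayBelow_le (hstep k)).trans (ih (Nat.lt_succ_iff.1 hlt))
      · rw [Nat.le_antisymm hnm hge]
  refine ⟨{y | ∃ n, c n ≤ y}, ⟨⟨0, le_top⟩, ?_, ?_, ?_⟩, ⟨0, hc0.le⟩, ?_⟩
  · rintro y z ⟨n, hn⟩ hyz
    exact ⟨n, hn.trans hyz⟩
  · rintro y z ⟨n, hn⟩ ⟨m, hm⟩
    exact ⟨max n m, le_inf ((hanti (le_max_left n m)).trans hn)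
      ((hanti (le_max_right n m)).trans hm)⟩
  · rintro D hne hdir ⟨n, hn⟩
    obtain ⟨d, hd, hc⟩ := hstep n D hne hdir hn
    exact ⟨d, hd, n + 1, hc⟩
  · rintro y ⟨n, hn⟩
    exact (wayBelow_le (hxc n)).trans hn

theorem frameHom_mono {p : FrameHom L Prop} {a b : L}
    (hab : a ≤ b) (h : p a) : p b := by
  have h2 : p a ≤ p b := OrderHomClass.mono p hab
  exact h2 h

open Locale in
/-- The saturated set determined by a Scott-open filter is compact in the space of points. -/
theorem isCompact_of_isSOF {F : Set L} (hF : IsSOF F) :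
    IsCompact {q : PT L | ∀ y ∈ F, q y} := by
  classical
  rw [isCompact_iff_finite_subcover]
  intro ι U hUopen hcover
  choose u hu using fun i => (PT.isOpen_iff L (U i)).1 (hUopen i)
  -- first: sSup (range u) ∈ F
  have hsup_mem : sSup (Set.range u) ∈ F := by
    by_contra hnot
    obtain ⟨p, hpF, hpb⟩ := exists_point hF hnot
    have hpK : p ∈ {q : PT L | ∀ y ∈ F, q y} := hpF
    obtain ⟨i, hpi⟩ := Set.mem_iUnion.1 (hcover hpK)
    rw [← hu i] at hpi
    exact hpb (frameHom_mono (le_sSup ⟨i, rfl⟩) hpi)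
  set D : Set L := {y | ∃ t : Finset ι, y = t.sup u} with hD
  have hne : D.Nonempty := ⟨⊥, ∅, by simp⟩
  have hdir : DirectedOn (· ≤ ·) D := by
    rintro y ⟨t, rfl⟩ z ⟨t', rfl⟩
    exact ⟨(t ∪ t').sup u, ⟨t ∪ t', rfl⟩, Finset.sup_mono Finset.subset_union_left,
      Finset.sup_mono Finset.subset_union_right⟩
  have hsupD : sSup D = sSup (Set.range u) := by
    apply le_antisymm
    · refine sSup_le ?_
      rintro _ ⟨t, rfl⟩
      exact Finset.sup_le fun i _ => le_sSup ⟨i, rfl⟩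
    · refine sSup_le ?_
      rintro _ ⟨i, rfl⟩
      exact le_sSup ⟨{i}, by simp⟩
  obtain ⟨_, ⟨t, rfl⟩, htF⟩ := hF.scott D hne hdir (by rw [hsupD]; exact hsup_mem)
  refine ⟨t, fun q hq => ?_⟩
  have hfin : ∀ s : Finset ι, q (s.sup u) → ∃ i ∈ s, q (u i) := by
    intro s
    induction s using Finset.induction_on with
    | empty =>
      intro hqt
      rw [Finset.sup_empty] at hqt
      exact absurd hqt (by simp [map_bot])
    | @insert j s hj ih =>
      intro hqt
      rw [Finset.sup_insert, map_sup] at hqt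
      rcases hqt with h | h
      · exact ⟨j, Finset.mem_insert_self _ _, h⟩
      · obtain ⟨i, hi, hqi⟩ := ih h
        exact ⟨i, Finset.mem_insert_of_mem hi, hqi⟩
  obtain ⟨i, hi, hqi⟩ := hfin t (hq _ htF)
  refine Set.mem_iUnion₂.2 ⟨i, hi, ?_⟩
  rw [← hu i]
  exact hqi

end HL

namespace HL
open Locale
variable {L : Type u} [Order.Frame L]

theorem pt_t0 : T0Space (PT L) := by
  refine t0Space_iff_inseparable (PT L) |>.2 fun p q h => ?_
  apply DFunLike.ext
  intro a
  have := h.mem_open_iff (s := {x : PT L | x a}) ⟨a, rfl⟩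
  exact propext this

theorem pt_quasiSober : QuasiSober (PT L) := by
  constructor
  intro Z hZirr hZclosed
  have hinf : ∀ a b : L, (∃ p ∈ Z, p (a ⊓ b)) = ((∃ p ∈ Z, p a) ∧ (∃ p ∈ Z, p b)) := by
    intro a b
    refine propext ⟨fun ⟨p, hpZ, hpab⟩ => ?_, fun h => ?_⟩
    · rw [map_inf] at hpab
      exact ⟨⟨p, hpZ, hpab.1⟩, ⟨p, hpZ, hpab.2⟩⟩
    · obtain ⟨⟨p1, hp1, ha⟩, ⟨p2, hp2, hb⟩⟩ := h
      obtain ⟨p, ⟨hpZ, hpa, hpb⟩⟩ := hZirr.2 {x : PT L | x a} {x : PT L | x b}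
        ⟨a, rfl⟩ ⟨b, rfl⟩ ⟨p1, hp1, ha⟩ ⟨p2, hp2, hb⟩
      exact ⟨p, hpZ, by rw [map_inf]; exact ⟨hpa, hpb⟩⟩
  have htop : (∃ p ∈ Z, p (⊤ : L)) = True := by
    refine propext ⟨fun _ => trivial, fun _ => ?_⟩
    obtain ⟨p, hp⟩ := hZirr.1
    exact ⟨p, hp, by rw [map_top]; trivial⟩
  have hsSup : ∀ T : Set L, (∃ p ∈ Z, p (sSup T)) =
      sSup ((fun a => ∃ p ∈ Z, p a) '' T) := by
    intro T
    rw [sSup_Prop_eq]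
    refine propext ⟨fun ⟨p, hpZ, hps⟩ => ?_, ?_⟩
    · rw [map_sSup, sSup_Prop_eq] at hps
      obtain ⟨_, ⟨t, ht, rfl⟩, hpt⟩ := hps
      exact ⟨_, ⟨t, ht, rfl⟩, p, hpZ, hpt⟩
    · rintro ⟨_, ⟨t, ht, rfl⟩, p, hpZ, hpt⟩
      exact ⟨p, hpZ, frameHom_mono (le_sSup ht) hpt⟩
  set q : FrameHom L Prop := ⟨⟨⟨fun a => ∃ p ∈ Z, p a, hinf⟩, htop⟩, hsSup⟩ with hqdef
  refine ⟨q, ?_⟩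
  have hqZ : q ∈ Z := by
    by_contra hqZ
    obtain ⟨w, hw⟩ := (PT.isOpen_iff L Zᶜ).1 hZclosed.isOpen_compl
    have hqw : q w := by
      have hq' : q ∈ Zᶜ := hqZ
      rwa [← hw] at hq'
    obtain ⟨p, hpZ, hpw⟩ := hqw
    have : p ∈ Zᶜ := by rw [← hw]; exact hpw
    exact this hpZ
  apply le_antisymm
  · exact hZclosed.closure_subset_iff.2 (Set.singleton_subset_iff.2 hqZ)
  · intro p hpZ
    rw [mem_closure_iff]
    rintro O hO hpO
    obtain ⟨w, rfl⟩ := (PT.isOpen_iff L O).1 hO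
    exact ⟨q, ⟨p, hpZ, hpO⟩, rfl⟩

theorem pt_locallyCompact (hcont : ∀ a : L, a = sSup {x : L | WayBelow x a}) :
    LocallyCompactSpace (PT L) := by
  constructor
  intro p n hn
  obtain ⟨O, hOn, hOopen, hpO⟩ := mem_nhds_iff.1 hn
  obtain ⟨a, rfl⟩ := (PT.isOpen_iff L O).1 hOopen
  have hpa : p a := hpO
  have : ∃ x, WayBelow x a ∧ p x := by
    rw [hcont a, map_sSup, sSup_Prop_eq] at hpa
    obtain ⟨_, ⟨x, hx, rfl⟩, hpx⟩ := hpa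
    exact ⟨x, hx, hpx⟩
  obtain ⟨x, hxa, hpx⟩ := this
  obtain ⟨F, hF, haF, hxF⟩ := chain_filter hcont hxa
  refine ⟨{q : PT L | ∀ y ∈ F, q y}, ?_, ?_, isCompact_of_isSOF hF⟩
  · rw [mem_nhds_iff]
    exact ⟨{q : PT L | q x}, fun q hq y hy => frameHom_mono (hxF y hy) hq,
      ⟨x, rfl⟩, hpx⟩
  · exact fun q hq => hOn (hq a haF)

end HL

section Parts1
open Locale

theorem opens_continuous {Y : Type u} [TopologicalSpace Y] (hlc : LocallyCompactSpace Y)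
    (a : Opens Y) : a = sSup {x : Opens Y | WayBelow x a} := by
  refine le_antisymm ?_ (sSup_le fun x hx => HL.wayBelow_le hx)
  rw [← SetLike.coe_subset_coe]
  intro y hy
  obtain ⟨K, hKnhds, hKsub, hKcomp⟩ := hlc.local_compact_nhds y a.1 (a.2.mem_nhds hy)
  set U : Opens Y := ⟨interior K, isOpen_interior⟩ with hUdef
  have hU : WayBelow U a := by
    intro D hne hdir hle
    haveI : Nonempty D := hne.to_subtype
    obtain ⟨⟨d, hd⟩, hKd⟩ := hKcomp.elim_directed_cover (fun d : D => (d.1 : Set Y))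
      (fun d => d.1.2)
      (fun z hz => by
        have hza : z ∈ a := hKsub hz
        have hzs : z ∈ (sSup D : Opens Y) := hle hza
        obtain ⟨d, hdD, hzd⟩ := Opens.mem_sSup.1 hzs
        exact Set.mem_iUnion.2 ⟨⟨d, hdD⟩, hzd⟩)
      (fun d e => by
        obtain ⟨f, hf, hdf, hef⟩ := hdir d.1 d.2 e.1 e.2
        exact ⟨⟨f, hf⟩, SetLike.coe_subset_coe.2 hdf, SetLike.coe_subset_coe.2 hef⟩)
    refine ⟨d, hd, ?_⟩
    rw [← SetLike.coe_subset_coe]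
    exact fun z hz => hKd (interior_subset hz)
  exact Opens.mem_sSup.2 ⟨U, hU, mem_interior_iff_mem_nhds.2 hKnhds⟩

theorem part1 (X : TopCat.{u}) (h : IsSoberLocallyCompact X) :
    IsContinuousLocale (topToLocale.obj X) :=
  fun a => opens_continuous h.2.2 a


end Parts1

namespace HL
open Locale

variable {Y : Type u} [TopologicalSpace Y]

theorem unit_injective [T0Space Y] : Function.Injective (localePointOfSpacePoint Y) := by
  intro x y hxy
  refine ((t0Space_iff_inseparable Y).1 ‹_› x y) ?_
  rw [inseparable_iff_forall_isOpen]
  intro s hs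
  have := DFunLike.congr_fun hxy ⟨s, hs⟩
  exact iff_of_eq this

theorem unit_surjective [QuasiSober Y] :
    Function.Surjective (localePointOfSpacePoint Y) := by
  intro p
  set W : Opens Y := sSup {U : Opens Y | ¬ p U} with hW
  have hpW : ¬ p W := by
    intro hp
    rw [hW, map_sSup, sSup_Prop_eq] at hp
    obtain ⟨_, ⟨U, hU, rfl⟩, hpU⟩ := hp
    exact hU hpU
  set Z : Set Y := (↑W)ᶜ with hZ
  have hle : ∀ {U : Opens Y}, ¬ p U → U ≤ W := fun h => le_sSup h
  have hmeet : ∀ U : Opens Y, p U → (Z ∩ ↑U).Nonempty := by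
    intro U hpU
    rw [Set.inter_comm]
    by_contra hcon
    rw [Set.not_nonempty_iff_eq_empty, ← Set.disjoint_iff_inter_eq_empty,
      Set.disjoint_compl_right_iff_subset] at hcon
    exact hpW (frameHom_mono (show U ≤ W from hcon) hpU)
  have hZirr : IsIrreducible Z := by
    constructor
    · obtain ⟨z, hz, _⟩ := hmeet ⊤ (by rw [map_top]; trivial)
      exact ⟨z, hz⟩
    · intro u v hu hv ⟨zu, hzuZ, hzuu⟩ ⟨zv, hzvZ, hzvv⟩
      have hpu : p ⟨u, hu⟩ := by
        by_contra hnp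
        exact hzuZ (hle hnp hzuu)
      have hpv : p ⟨v, hv⟩ := by
        by_contra hnp
        exact hzvZ (hle hnp hzvv)
      have hpuv : p (⟨u, hu⟩ ⊓ ⟨v, hv⟩) := by
        rw [map_inf]; exact ⟨hpu, hpv⟩
      obtain ⟨z, hzZ, hzuv⟩ := hmeet _ hpuv
      exact ⟨z, hzZ, hzuv⟩
  obtain ⟨x, hx⟩ := QuasiSober.sober hZirr (by rw [hZ]; exact W.2.isClosed_compl)
  have hxZ : x ∈ Z := by rw [← hx]; exact subset_closure rfl
  refine ⟨x, ?_⟩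
  apply DFunLike.ext
  intro U
  refine propext ⟨fun hxU => ?_, fun hpU => ?_⟩
  · -- x ∈ U → p U
    by_contra hnp
    exact hxZ (hle hnp hxU)
  · -- p U → x ∈ U
    obtain ⟨z, hzZ, hzU⟩ := hmeet U hpU
    have hzcl : z ∈ closure ({x} : Set Y) := by rw [hx]; exact hzZ
    obtain ⟨w, hwU, hwx⟩ := mem_closure_iff.1 hzcl U U.2 hzU
    have hwx' : w = x := hwx
    rwa [hwx'] at hwU

theorem unit_isOpenMap (hsurj : Function.Surjective (localePointOfSpacePoint Y)) :
    IsOpenMap (localePointOfSpacePoint Y) := by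
  intro U hU
  have : localePointOfSpacePoint Y '' U = {q : PT (Opens Y) | q ⟨U, hU⟩} := by
    ext q
    constructor
    · rintro ⟨x, hx, rfl⟩; exact hx
    · intro hq
      obtain ⟨x, rfl⟩ := hsurj q
      exact ⟨x, hq, rfl⟩
  rw [this]
  exact ⟨⟨U, hU⟩, rfl⟩

end HL

section MainParts
open Locale HL
attribute [local instance] CategoryTheory.ConcreteCategory.instFunLike

theorem part3 (X : TopCat.{u}) (h : IsSoberLocallyCompact X) :
    IsIso (adjunctionTopToLocalePT.unit.app X) := by
  obtain ⟨hsober, ht0, _⟩ := h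
  haveI : QuasiSober X := hsober
  haveI : T0Space X := ht0
  have hbij : Function.Bijective (localePointOfSpacePoint X) :=
    ⟨unit_injective, unit_surjective⟩
  set e : X ≃ PT (Opens X) := Equiv.ofBijective _ hbij with he
  have hcont : Continuous (localePointOfSpacePoint X) :=
    (adjunctionTopToLocalePT.unit.app X).hom.continuous
  set homeo := Equiv.toHomeomorphOfContinuousOpen e hcont (unit_isOpenMap hbij.2)
    with hhomeo
  refine ⟨⟨TopCat.ofHom ⟨homeo.symm, homeo.symm.continuous⟩, ?_, ?_⟩⟩
  · ext x
    exact e.symm_apply_apply x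
  · ext p
    exact e.apply_symm_apply p

theorem part4 (L : Locale.{u}) (hcont : IsContinuousLocale L) :
    IsIso (adjunctionTopToLocalePT.counit.app L) := by
  have hreflect : ∀ a b : ↥L, counitAppCont L a ≤ counitAppCont L b → a ≤ b := by
    intro a b hab
    conv_lhs => rw [hcont a]
    refine sSup_le fun x hx => ?_
    by_contra hxb
    obtain ⟨F, hF, haF, hxF⟩ := chain_filter hcont hx
    have hbF : b ∉ F := fun hbF => hxb (hxF b hbF)
    obtain ⟨p, hpF, hpb⟩ := exists_point hF hbF
    exact hpb (hab (show p ∈ counitAppCont L a from hpF a haF))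
  have hsurj : Function.Surjective (counitAppCont L) := by
    intro O
    obtain ⟨u, hu⟩ := (PT.isOpen_iff _ (O : Set (PT ↥L))).1 O.2
    exact ⟨u, Opens.ext hu⟩
  have hinj : Function.Injective (counitAppCont L) := fun a b hab =>
    le_antisymm (hreflect a b hab.le) (hreflect b a hab.ge)
  set e : ↥L ≃o Opens (PT ↥L) :=
    { toEquiv := Equiv.ofBijective _ ⟨hinj, hsurj⟩
      map_rel_iff' := by
        intro a b
        exact ⟨fun hab => hreflect a b hab,
          fun hab => OrderHomClass.mono (counitAppCont L) hab⟩ } with hedef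
  have heq : (adjunctionTopToLocalePT.counit.app L).unop = (Frm.Iso.mk e).hom := by
    apply DFunLike.ext
    intro a
    rfl
  have hiso : IsIso ((adjunctionTopToLocalePT.counit.app L).unop) := by
    rw [heq]
    infer_instance
  rw [← (adjunctionTopToLocalePT.counit.app L).op_unop]
  exact isIso_op _

end MainParts

theorem part2 (L : Locale.{u}) (h : IsContinuousLocale L) :
    IsSoberLocallyCompact (Locale.pt.obj L) :=
  ⟨HL.pt_quasiSober, HL.pt_t0, HL.pt_locallyCompact h⟩

/-- **Hofmann–Lawson duality.** The adjunction between `Top` and `Loc`,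
given by the open-sets functor `topToLocale` and the points functor `pt`, restricts to
an equivalence between the full subcategory of sober locally compact spaces and the full
subcategory of continuous locales: both functors preserve these subcategories, the unit
is an isomorphism at every sober locally compact space, and the counit is an isomorphism
at every continuous locale. -/
theorem hofmannLawson_duality :
    (∀ X : TopCat.{u}, IsSoberLocallyCompact X →
        IsContinuousLocale (topToLocale.obj X)) ∧
    (∀ L : Locale.{u}, IsContinuousLocale L →
        IsSoberLocallyCompact (Locale.pt.obj L)) ∧
    (∀ X : TopCat.{u}, IsSoberLocallyCompact X →
        IsIso (Locale.adjunctionTopToLocalePT.unit.app X)) ∧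
    (∀ L : Locale.{u}, IsContinuousLocale L →
        IsIso (Locale.adjunctionTopToLocalePT.counit.app L)) :=
  ⟨part1, part2, part3, part4⟩
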